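/- For every vector a ∈ ℂ³ with ‖a‖ = 1 there exist θ ∈ [−π/4, π/4] and a real 3×3 matrix G in SO(3) such that a aᴴ = Gᵀ (v(θ) v(θ)ᴴ) G, where v(θ) = (cos θ, −i sin θ, 0)ᵀ ∈ ℂ³, aᴴ denotes the conjugate-transpose row vector (so a aᴴ is the 3×3 rank-one matrix with entries aᵢ conj(aⱼ)), and the real entries of G are regarded as complex scalars. Consequently every rank-one GKS matrix A = a aᴴ with unit vector a can be brought to the normal form A(θ) = v(θ) v(θ)ᴴ by conjugation with an element of SO(3). -/

import Mathlib

open Matrix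

/-- The normal-form vector `v(θ) = (cos θ, −i sin θ, 0)ᵀ ∈ ℂ³`. -/
noncomputable def normalFormVec (θ : ℝ) : Fin 3 → ℂ :=
  ![(Real.cos θ : ℂ), -Complex.I * (Real.sin θ : ℂ), 0]

/-- The rank-one outer product `a aᴴ` of a complex 3-vector, with `(i,j)` entry
`aᵢ · conj(aⱼ)`. -/
noncomputable def outer (a : Fin 3 → ℂ) : Matrix (Fin 3) (Fin 3) ℂ :=
  Matrix.of fun i j => a i * (starRingEnd ℂ) (a j)

lemma main_helper (θ : ℝ) (u w : Fin 3 → ℝ) (z : ℂ) (a : Fin 3 → ℂ)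
    (hu : u 0^2 + u 1^2 + u 2^2 = 1) (hw : w 0^2 + w 1^2 + w 2^2 = 1)
    (huw : u 0*w 0 + u 1*w 1 + u 2*w 2 = 0)
    (hz : z * (starRingEnd ℂ) z = 1)
    (key : ∀ i, z * a i = (Real.cos θ : ℂ) * u i - Complex.I * Real.sin θ * w i) :
    ∃ G : Matrix (Fin 3) (Fin 3) ℝ, G * Gᵀ = 1 ∧ G.det = 1 ∧
      outer a = (G.map Complex.ofReal)ᵀ * outer (normalFormVec θ) * G.map Complex.ofReal := by
  refine ⟨Matrix.of ![u, w, ![u 1*w 2 - u 2*w 1, u 2*w 0 - u 0*w 2, u 0*w 1 - u 1*w 0]], ?_, ?_, ?_⟩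
  · ext i j
    fin_cases i <;> fin_cases j <;>
      simp [Matrix.mul_apply, Fin.sum_univ_three, Matrix.one_apply, Matrix.vecHead,
        Matrix.vecTail, Matrix.transpose_apply]
    · linear_combination hu
    · linear_combination huw
    · ring
    · linear_combination huw
    · linear_combination hw
    · ring
    · ring
    · ring
    · linear_combination (w 0^2 + w 1^2 + w 2^2) * hu + hw - (u 0*w 0 + u 1*w 1 + u 2*w 2) * huw
  · rw [Matrix.det_fin_three]
    simp [Matrix.vecHead, Matrix.vecTail]
    linear_combination (w 0^2 + w 1^2 + w 2^2) * hu + hw - (u 0*w 0 + u 1*w 1 + u 2*w 2) * huw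
  · ext i j
    have e : a i * (starRingEnd ℂ) (a j) = (z * a i) * (starRingEnd ℂ) (z * a j) := by
      rw [_root_.map_mul]
      calc a i * (starRingEnd ℂ) (a j)
          = (z * (starRingEnd ℂ) z) * (a i * (starRingEnd ℂ) (a j)) := by rw [hz]; ring
        _ = z * a i * ((starRingEnd ℂ) z * (starRingEnd ℂ) (a j)) := by ring
    simp only [outer, Matrix.of_apply]
    rw [e, key i, key j]
    simp only [Matrix.mul_apply, Fin.sum_univ_three, normalFormVec, Matrix.map_apply,
      Matrix.transpose_apply, Matrix.of_apply, Matrix.cons_val_zero, Matrix.cons_val_one,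
      Matrix.head_cons, Matrix.cons_val_two, Matrix.vecHead, Matrix.vecTail, Function.comp_apply,
      map_sub, _root_.map_mul, Complex.conj_I, Complex.conj_ofReal, map_neg, map_zero,
      Matrix.cons_val_succ, Matrix.cons_val_fin_one]
    ring

set_option maxHeartbeats 2000000 in
/-- For every unit vector `a ∈ ℂ³` there exist `θ ∈ [−π/4, π/4]` and
`G ∈ SO(3)` such that `a aᴴ = Gᵀ (v(θ) v(θ)ᴴ) G` with `v(θ) = (cos θ, −i sin θ, 0)ᵀ`. -/
theorem rank_one_gks_normal_form (a : EuclideanSpace ℂ (Fin 3)) (ha : ‖a‖ = 1) :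
    ∃ θ : ℝ, θ ∈ Set.Icc (-(Real.pi / 4)) (Real.pi / 4) ∧
      ∃ G : Matrix (Fin 3) (Fin 3) ℝ, G * Gᵀ = 1 ∧ G.det = 1 ∧
        outer (fun i => a i) =
          (G.map Complex.ofReal)ᵀ * outer (normalFormVec θ) * G.map Complex.ofReal := by
  set s : ℂ := a 0^2 + a 1^2 + a 2^2 with hs
  set z : ℂ := Complex.exp ((-(s.arg/2) : ℝ) * Complex.I) with hzdef
  have hz : z * (starRingEnd ℂ) z = 1 := by
    obtain ⟨t, ht⟩ : ∃ t : ℝ, z = Complex.exp ((t:ℝ) * Complex.I) := ⟨-(s.arg/2), hzdef⟩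
    rw [ht, ← Complex.exp_conj, ← Complex.exp_add]
    rw [show (starRingEnd ℂ) ((t : ℝ) * Complex.I) = -((t : ℝ) * Complex.I) by
      simp [_root_.map_mul, Complex.conj_ofReal, Complex.conj_I]]
    simp
  have hz2 : z^2 * s = (‖s‖ : ℂ) := by
    have h1 : z^2 = Complex.exp ((-(s.arg) : ℝ) * Complex.I) := by
      rw [hzdef, sq, ← Complex.exp_add]
      congr 1
      push_cast
      ring
    have h2 := Complex.norm_mul_exp_arg_mul_I s
    calc z^2 * s = Complex.exp ((-(s.arg) : ℝ) * Complex.I) *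
          ((‖s‖ : ℂ) * Complex.exp ((s.arg : ℝ) * Complex.I)) := by rw [h1, h2]
      _ = (‖s‖ : ℂ) *
          Complex.exp ((-(s.arg) : ℝ) * Complex.I + (s.arg : ℝ) * Complex.I) := by
            rw [Complex.exp_add]; ring
      _ = (‖s‖ : ℂ) := by
            rw [show ((-s.arg : ℝ):ℂ)*Complex.I + (s.arg:ℝ)*Complex.I = 0 by push_cast; ring,
              Complex.exp_zero, mul_one]
  set p : Fin 3 → ℝ := fun i => (z * a i).re with hp
  set q : Fin 3 → ℝ := fun i => (z * a i).im with hq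
  have hbi : ∀ i, z * a i = (p i : ℂ) + (q i : ℂ) * Complex.I := fun i =>
    (Complex.re_add_im _).symm
  have habs : ‖a 0‖^2 + ‖a 1‖^2 + ‖a 2‖^2 = 1 := by
    have h1 := EuclideanSpace.norm_eq a
    rw [ha, Fin.sum_univ_three] at h1
    have := Real.sqrt_eq_one.mp h1.symm
    simpa using this
  have hnz : Complex.normSq z = 1 := by
    have := congrArg Complex.re (Complex.mul_conj z ▸ hz)
    simpa using this
  have hsum : (p 0^2 + q 0^2) + (p 1^2 + q 1^2) + (p 2^2 + q 2^2) = 1 := by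
    have e : ∀ i, p i^2 + q i^2 = ‖a i‖^2 := by
      intro i
      have h1 : p i^2 + q i^2 = Complex.normSq (z * a i) := by
        simp [Complex.normSq_apply, hp, hq]; ring
      rw [h1, Complex.normSq_mul, hnz, one_mul, Complex.sq_norm]
    rw [e 0, e 1, e 2, habs]
  have hb : (z*a 0)^2 + (z*a 1)^2 + (z*a 2)^2 = ((‖s‖ : ℝ) : ℂ) := by
    rw [show (z*a 0)^2 + (z*a 1)^2 + (z*a 2)^2 = z^2 * (a 0^2 + a 1^2 + a 2^2) by ring, ← hs, hz2]
  rw [hbi 0, hbi 1, hbi 2] at hb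
  have habs_nonneg : (0:ℝ) ≤ ‖s‖ := norm_nonneg _
  have hdiff : (p 0^2 - q 0^2) + (p 1^2 - q 1^2) + (p 2^2 - q 2^2) = ‖s‖ := by
    have := congrArg Complex.re hb
    simp [pow_two, Complex.add_re, Complex.add_im, Complex.mul_re, Complex.mul_im] at this
    linarith
  have hpq : p 0 * q 0 + p 1 * q 1 + p 2 * q 2 = 0 := by
    have := congrArg Complex.im hb
    simp [pow_two, Complex.add_re, Complex.add_im, Complex.mul_re, Complex.mul_im] at this
    linarith
  have hSq_nonneg : (0:ℝ) ≤ q 0^2 + q 1^2 + q 2^2 := by positivity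
  have hSp_nonneg : (0:ℝ) ≤ p 0^2 + p 1^2 + p 2^2 := by positivity
  have hle : q 0^2 + q 1^2 + q 2^2 ≤ 1/2 := by linarith
  set Q : ℝ := Real.sqrt (q 0^2 + q 1^2 + q 2^2) with hQdef
  set θ : ℝ := Real.arcsin Q with hθdef
  have hQ0 : 0 ≤ Q := Real.sqrt_nonneg _
  have hQ1 : Q ≤ 1 := by
    rw [hQdef, show (1:ℝ) = Real.sqrt 1 by simp]
    exact Real.sqrt_le_sqrt (by linarith)
  have hsin : Real.sin θ = Q := Real.sin_arcsin (by linarith) hQ1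
  have hcos : Real.cos θ = Real.sqrt (p 0^2 + p 1^2 + p 2^2) := by
    rw [hθdef, Real.cos_arcsin, hQdef, Real.sq_sqrt hSq_nonneg]
    congr 1
    linarith
  refine ⟨θ, ⟨?_, ?_⟩, ?_⟩
  · have h0 : 0 ≤ θ := Real.arcsin_nonneg.mpr hQ0
    have := Real.pi_pos
    linarith
  · rw [hθdef]
    have hmem : Real.pi/4 ∈ Set.Icc (-(Real.pi/2)) (Real.pi/2) := by
      constructor <;> linarith [Real.pi_pos]
    rw [Real.arcsin_le_iff_le_sin ⟨by linarith, hQ1⟩ hmem, Real.sin_pi_div_four]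
    nlinarith [Real.sq_sqrt (show (0:ℝ) ≤ 2 by norm_num), Real.sqrt_nonneg 2,
      Real.sq_sqrt hSq_nonneg, hQ0, hle]
  · by_cases hq0 : q 0^2 + q 1^2 + q 2^2 = 0
    · -- imaginary part vanishes
      have h0 : q 0 = 0 := by nlinarith [sq_nonneg (q 0), sq_nonneg (q 1), sq_nonneg (q 2)]
      have h1 : q 1 = 0 := by nlinarith [sq_nonneg (q 0), sq_nonneg (q 1), sq_nonneg (q 2)]
      have h2 : q 2 = 0 := by nlinarith [sq_nonneg (q 0), sq_nonneg (q 1), sq_nonneg (q 2)]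
      have hqz : ∀ i, q i = 0 := by intro i; fin_cases i <;> assumption
      have hSp : p 0^2 + p 1^2 + p 2^2 = 1 := by
        rw [h0, h1, h2] at hsum; simpa using hsum
      have hcos1 : Real.cos θ = 1 := by rw [hcos, hSp, Real.sqrt_one]
      have hsin0 : Real.sin θ = 0 := by rw [hsin, hQdef, hq0, Real.sqrt_zero]
      have key : ∀ (w : Fin 3 → ℝ) (i : Fin 3),
          z * a i = (Real.cos θ : ℂ) * p i - Complex.I * Real.sin θ * w i := by
        intro w i
        rw [hbi i, hqz i, hcos1, hsin0]
        push_cast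
        ring
      by_cases h12 : p 1 = 0 ∧ p 2 = 0
      · refine main_helper θ p ![0,1,0] z (fun i => a i) hSp (by norm_num; rfl) ?_ hz (key ![0,1,0])
        simp [h12.1]
      · have hr : 0 < p 1^2 + p 2^2 := by
          rcases not_and_or.mp h12 with h | h
          · have := sq_pos_of_ne_zero h; nlinarith [sq_nonneg (p 2)]
          · have := sq_pos_of_ne_zero h; nlinarith [sq_nonneg (p 1)]
        set r : ℝ := Real.sqrt (p 1^2 + p 2^2) with hrdef
        have hrpos : 0 < r := Real.sqrt_pos.mpr hr
        have hr2 : r^2 = p 1^2 + p 2^2 := Real.sq_sqrt hr.le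
        refine main_helper θ p ![0, p 2 / r, -(p 1)/r] z (fun i => a i) hSp ?_ ?_ hz
          (key ![0, p 2 / r, -(p 1)/r])
        · simp only [Matrix.cons_val_zero, Matrix.cons_val_one, Matrix.head_cons,
            Matrix.cons_val_two, Matrix.vecHead, Matrix.vecTail, Function.comp_apply,
            Matrix.cons_val_succ]
          field_simp
          linarith [hr2]
        · simp only [Matrix.cons_val_zero, Matrix.cons_val_one, Matrix.head_cons,
            Matrix.cons_val_two, Matrix.vecHead, Matrix.vecTail, Function.comp_apply,
            Matrix.cons_val_succ]
          ring
    · -- imaginary part does not vanish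
      have hSqpos : 0 < q 0^2 + q 1^2 + q 2^2 := lt_of_le_of_ne hSq_nonneg (Ne.symm hq0)
      have hSppos : 0 < p 0^2 + p 1^2 + p 2^2 := by linarith
      set P : ℝ := Real.sqrt (p 0^2 + p 1^2 + p 2^2) with hPdef
      have hPpos : 0 < P := Real.sqrt_pos.mpr hSppos
      have hQpos : 0 < Q := Real.sqrt_pos.mpr hSqpos
      have hP2 : P^2 = p 0^2 + p 1^2 + p 2^2 := Real.sq_sqrt hSppos.le
      have hQ2 : Q^2 = q 0^2 + q 1^2 + q 2^2 := Real.sq_sqrt hSqpos.le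
      refine main_helper θ (fun i => p i / P) (fun i => -(q i) / Q) z (fun i => a i)
        ?_ ?_ ?_ hz ?_
      · field_simp
        linarith [hP2]
      · field_simp
        linarith [hQ2]
      · have e : (p 0/P)*(-(q 0)/Q) + (p 1/P)*(-(q 1)/Q) + (p 2/P)*(-(q 2)/Q)
            = -((p 0 * q 0 + p 1 * q 1 + p 2 * q 2))/(P*Q) := by ring
        simp [e, hpq]
      · intro i
        have hPne : (P:ℂ) ≠ 0 := by exact_mod_cast hPpos.ne'
        have hQne : (Q:ℂ) ≠ 0 := by exact_mod_cast hQpos.ne'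
        simp only [hcos, hsin, hbi i]
        push_cast
        field_simp
        ring
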